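/- If Ḡ is weakly connected and Ω, Ω₁ are nonempty disjoint compact subsets of Ḡ, then there exists an eventually flat function f ∈ 𝔸 with 0 ≤ f ≤ 1, f ≡ 1 on Ω, and f ≡ 0 on Ω₁. -/

import Mathlib

open UniformSpace Filter Topology
open scoped ENNReal

noncomputable section

/-- A locally finite edge-weighted (resistance) graph. -/
structure WGraph (V : Type*) where
  Adj : V → V → Prop
  symm : ∀ u v, Adj u v → Adj v u
  loopless : ∀ v, ¬ Adj v v
  R : V → V → ℝ
  Rsymm : ∀ u v, R u v = R v u
  Rpos : ∀ u v, Adj u v → 0 < R u v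
  locFin : ∀ v, {u | Adj u v}.Finite

namespace WGraph

variable {V : Type*} (G : WGraph V)

/-- The set of edges, as unordered pairs of vertices. -/
def edgeSet : Set (Sym2 V) := {e | ∃ u v, G.Adj u v ∧ e = s(u, v)}

/-- The set of total lengths of finite paths joining `u` to `v`. -/
def pathLengths (u v : V) : Set ℝ :=
  {L | ∃ (n : ℕ) (p : ℕ → V), p 0 = u ∧ p n = v ∧
        (∀ k < n, G.Adj (p k) (p (k + 1))) ∧
        L = ∑ k ∈ Finset.range n, G.R (p k) (p (k + 1))}

/-- `G` is connected: any two vertices are joined by a finite path. -/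
def Connected : Prop := ∀ u v : V, (G.pathLengths u v).Nonempty

/-- The metric on the vertex set is the minimal resistance path metric of `G`. -/
def IsPathMetric [MetricSpace V] : Prop :=
  ∀ u v : V, dist u v = sInf (G.pathLengths u v)

/-- Eventually flat functions: the values differ across only finitely many edges. -/
def EventuallyFlat (φ : V → ℝ) : Prop :=
  {p : V × V | G.Adj p.1 p.2 ∧ φ p.1 ≠ φ p.2}.Finite

open Classical in
/-- The conductance: the reciprocal resistance on edges, `0` off edges. -/
def cond (u v : V) : ℝ := if G.Adj u v then (G.R u v)⁻¹ else 0

/-- `f` is harmonic at `v`: its value is the conductance-weighted average of the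
values at the adjacent vertices. -/
def HarmonicAt (f : V → ℝ) (v : V) : Prop :=
  f v = (∑ u ∈ (G.locFin v).toFinset, G.cond u v)⁻¹ *
          ∑ u ∈ (G.locFin v).toFinset, G.cond u v * f u

/-- The weighted `ℓ²(μ)` inner product. -/
def winner (μ : V → ℝ) (f g : V → ℝ) : ℝ := ∑' v, f v * g v * μ v

/-- The bilinear (energy) form associated to conductances `C`. -/
def Bform (C : V → V → ℝ) (f g : V → ℝ) : ℝ :=
  (1 / 2) * ∑' p : V × V, C p.1 p.2 * (f p.1 - f p.2) * (g p.1 - g p.2)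

/-- The formal Laplacian `Δ_μ`. -/
def lap (C : V → V → ℝ) (μ : V → ℝ) (f : V → ℝ) (v : V) : ℝ :=
  (1 / μ v) * ∑' u, C u v * (f v - f u)

/-- The (possibly infinite) energy of `f`. -/
def energy (C : V → V → ℝ) (f : V → ℝ) : ℝ≥0∞ :=
  (1 / 2) * ∑' p : V × V, ENNReal.ofReal (C p.1 p.2 * (f p.1 - f p.2) ^ 2)

variable [MetricSpace V]

/-- A path in the completion `Ḡ` joining `x` and `y`: a two-sided sequence of
vertices (stationary steps are allowed, so this encodes finite paths, rays and
double rays) converging to `x` and `y` at its two ends. -/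
structure CPath (x y : Completion V) where
  p : ℤ → V
  step : ∀ k, p k = p (k + 1) ∨ G.Adj (p k) (p (k + 1))
  tendsto_left : Tendsto (fun n : ℕ => ((p (-(n : ℤ)) : V) : Completion V)) atTop (nhds x)
  tendsto_right : Tendsto (fun n : ℕ => ((p (n : ℤ) : V) : Completion V)) atTop (nhds y)

end WGraph

/-- The path `γ` uses (contains) the edge `e`. -/
def WGraph.CPath.uses {V : Type*} [MetricSpace V] {G : WGraph V}
    {x y : Completion V} (γ : G.CPath x y) (e : Sym2 V) : Prop :=
  ∃ k : ℤ, γ.p k ≠ γ.p (k + 1) ∧ e = s(γ.p k, γ.p (k + 1))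

namespace WGraph

variable {V : Type*} (G : WGraph V) [MetricSpace V]

/-- The completion `Ḡ` is weakly connected: any two distinct points admit a
finite set of edges met by every path joining them. -/
def WeaklyConnected : Prop :=
  ∀ x y : Completion V, x ≠ y →
    ∃ W : Set (Sym2 V), W.Finite ∧ W ⊆ G.edgeSet ∧
      ∀ γ : G.CPath x y, ∃ e ∈ W, γ.uses e

end WGraph

section Aux

namespace EFU

variable {V : Type*} {G : WGraph V}

lemma pathLengths_nonneg {u v : V} {L : ℝ} (hL : L ∈ G.pathLengths u v) : 0 ≤ L := by
  obtain ⟨n, p, -, -, hadj, rfl⟩ := hL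
  exact Finset.sum_nonneg fun k hk => (G.Rpos _ _ (hadj k (Finset.mem_range.mp hk))).le

/-- One (possibly stationary) step avoiding edges of `W`. -/
def WStep (G : WGraph V) (W : Set (Sym2 V)) (u v : V) : Prop :=
  u = v ∨ (G.Adj u v ∧ s(u, v) ∉ W)

lemma WStep.symm' {W : Set (Sym2 V)} {u v : V} (h : WStep G W u v) : WStep G W v u := by
  rcases h with h | ⟨h1, h2⟩
  · exact Or.inl h.symm
  · exact Or.inr ⟨G.symm _ _ h1, by rwa [Sym2.eq_swap]⟩

/-- A finite path avoiding edges of `W` (stationary steps allowed). -/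
def WPath (G : WGraph V) (W : Set (Sym2 V)) (u v : V) : Prop :=
  ∃ (n : ℕ) (p : ℕ → V), p 0 = u ∧ p n = v ∧ ∀ k < n, WStep G W (p k) (p (k + 1))

lemma WPath.refl (W : Set (Sym2 V)) (u : V) : WPath G W u u :=
  ⟨0, fun _ => u, rfl, rfl, fun k hk => absurd hk (Nat.not_lt_zero k)⟩

lemma WPath.symm {W : Set (Sym2 V)} {u v : V} (h : WPath G W u v) : WPath G W v u := by
  obtain ⟨n, p, h0, h1, hs⟩ := h
  refine ⟨n, fun j => p (n - j), by simp [h1], by simp [h0], fun k hk => ?_⟩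
  have e2 : n - (k + 1) = n - k - 1 := by omega
  have e3 : n - k = (n - k - 1) + 1 := by omega
  dsimp only
  rw [e2, e3]
  exact (hs (n - k - 1) (by omega)).symm'

lemma WPath.trans {W : Set (Sym2 V)} {u v w : V} (h : WPath G W u v) (h' : WPath G W v w) :
    WPath G W u w := by
  obtain ⟨n, p, h0, h1, hs⟩ := h
  obtain ⟨m, q, g0, g1, gs⟩ := h'
  have key : ∀ k, n ≤ k → (if k ≤ n then p k else q (k - n)) = q (k - n) := by
    intro k hk
    rcases eq_or_lt_of_le hk with rfl | hlt
    · rw [if_pos le_rfl, Nat.sub_self, h1, g0]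
    · rw [if_neg (by omega)]
  refine ⟨n + m, fun k => if k ≤ n then p k else q (k - n), by simp [h0], ?_, ?_⟩
  · dsimp only
    rw [key (n + m) (Nat.le_add_right _ _), Nat.add_sub_cancel_left, g1]
  · intro k hk
    dsimp only
    rcases lt_or_ge k n with hlt | hge
    · rw [if_pos hlt.le, if_pos (by omega)]
      exact hs k hlt
    · rw [key k hge, key (k + 1) (by omega)]
      have e : k + 1 - n = (k - n) + 1 := by omega
      rw [e]
      exact gs (k - n) (by omega)

lemma WPath.single {W : Set (Sym2 V)} {u v : V} (h1 : G.Adj u v) (h2 : s(u, v) ∉ W) :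
    WPath G W u v := by
  refine ⟨1, fun k => if k = 0 then u else v, by simp, by simp, fun k hk => ?_⟩
  interval_cases k
  exact Or.inr ⟨h1, h2⟩

open Classical in
/-- The minimal resistance among the edges of `W` (`1` if `W` is empty). -/
def rmin (G : WGraph V) (W : Set (Sym2 V)) (hW : W.Finite) : ℝ :=
  if h : hW.toFinset.Nonempty then hW.toFinset.inf' h (Sym2.lift ⟨G.R, G.Rsymm⟩) else 1

lemma rmin_pos {W : Set (Sym2 V)} (hW : W.Finite) (hsub : W ⊆ G.edgeSet) :
    0 < rmin G W hW := by
  rw [rmin]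
  split_ifs with h
  · refine (Finset.lt_inf'_iff h).mpr fun e he => ?_
    rw [Set.Finite.mem_toFinset] at he
    obtain ⟨a, b, hab, rfl⟩ := hsub he
    simpa using G.Rpos a b hab
  · norm_num

lemma rmin_le {W : Set (Sym2 V)} (hW : W.Finite) {u v : V} (h : s(u, v) ∈ W) :
    rmin G W hW ≤ G.R u v := by
  have hne : hW.toFinset.Nonempty := ⟨_, hW.mem_toFinset.mpr h⟩
  rw [rmin, dif_pos hne]
  have := Finset.inf'_le (f := Sym2.lift ⟨G.R, G.Rsymm⟩) (hW.mem_toFinset.mpr h)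
  rwa [Sym2.lift_mk] at this

/-- The steps of a short genuine path avoid all edges of `W`. -/
lemma steps_avoid {W : Set (Sym2 V)} (hW : W.Finite) {n : ℕ} {p : ℕ → V}
    (hadj : ∀ k < n, G.Adj (p k) (p (k + 1)))
    (hlen : ∑ k ∈ Finset.range n, G.R (p k) (p (k + 1)) < rmin G W hW) :
    ∀ k < n, WStep G W (p k) (p (k + 1)) := by
  intro k hk
  refine Or.inr ⟨hadj k hk, fun hmem => ?_⟩
  have h1 : rmin G W hW ≤ G.R (p k) (p (k + 1)) := rmin_le hW hmem
  have h2 : G.R (p k) (p (k + 1)) ≤ ∑ i ∈ Finset.range n, G.R (p i) (p (i + 1)) :=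
    Finset.single_le_sum (fun i hi => (G.Rpos _ _ (hadj i (Finset.mem_range.mp hi))).le)
      (Finset.mem_range.mpr hk)
  linarith

lemma fiber_finite (a : Sym2 V) : {p : V × V | s(p.1, p.2) = a}.Finite := by
  induction a using Sym2.ind with
  | _ u v =>
    refine Set.Finite.subset ((Set.finite_singleton (v, u)).insert (u, v)) ?_
    rintro ⟨a, b⟩ h
    rw [Set.mem_setOf_eq, Sym2.eq_iff] at h
    rcases h with ⟨rfl, rfl⟩ | ⟨rfl, rfl⟩ <;> simp

lemma pad_seg {W : Set (Sym2 V)} {n : ℕ} {p : ℕ → V} {u v : V} (S : Set V)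
    (h0 : p 0 = u) (h1 : p n = v) (hs : ∀ k < n, WStep G W (p k) (p (k + 1)))
    (hS : ∀ j ≤ n, p j ∈ S) :
    ∃ (m : ℕ) (q : ℕ → V), 1 ≤ m ∧ q 0 = u ∧ q m = v ∧
      (∀ k < m, WStep G W (q k) (q (k + 1))) ∧ ∀ j ≤ m, q j ∈ S := by
  refine ⟨n + 1, fun j => if j = 0 then p 0 else p (j - 1), by omega, by simp [h0],
    by simp [h1], ?_, ?_⟩
  · intro k hk
    dsimp only
    rcases Nat.eq_zero_or_pos k with rfl | hkpos
    · norm_num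
      exact Or.inl rfl
    · rw [if_neg (by omega), if_neg (by omega)]
      have e : k + 1 - 1 = (k - 1) + 1 := by omega
      rw [e]
      exact hs (k - 1) (by omega)
  · intro j hj
    dsimp only
    split_ifs
    · exact hS 0 (Nat.zero_le n)
    · exact hS (j - 1) (by omega)

section Metric

variable [MetricSpace V]

lemma dist_le_of_mem (hmet : G.IsPathMetric) {u v : V} {L : ℝ} (hL : L ∈ G.pathLengths u v) :
    dist u v ≤ L := by
  rw [hmet]
  exact csInf_le ⟨0, fun L' hL' => pathLengths_nonneg hL'⟩ hL

lemma exists_short (hmet : G.IsPathMetric) (hconn : G.Connected) {u v : V} {b : ℝ}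
    (h : dist u v < b) :
    ∃ (n : ℕ) (p : ℕ → V), p 0 = u ∧ p n = v ∧ (∀ k < n, G.Adj (p k) (p (k + 1))) ∧
      ∑ k ∈ Finset.range n, G.R (p k) (p (k + 1)) < b := by
  rw [hmet] at h
  obtain ⟨L, hL, hLb⟩ := exists_lt_of_csInf_lt (hconn u v) h
  obtain ⟨n, p, h0, h1, hadj, rfl⟩ := hL
  exact ⟨n, p, h0, h1, hadj, hLb⟩

lemma vertex_dist_le (hmet : G.IsPathMetric) {u : V} {n : ℕ} {p : ℕ → V}
    (h0 : p 0 = u) (hadj : ∀ k < n, G.Adj (p k) (p (k + 1))) {j : ℕ} (hj : j ≤ n) :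
    dist u (p j) ≤ ∑ k ∈ Finset.range n, G.R (p k) (p (k + 1)) := by
  have hmem : (∑ k ∈ Finset.range j, G.R (p k) (p (k + 1))) ∈ G.pathLengths u (p j) :=
    ⟨j, p, h0, rfl, fun k hk => hadj k (lt_of_lt_of_le hk hj), rfl⟩
  refine (dist_le_of_mem hmet hmem).trans ?_
  exact Finset.sum_le_sum_of_subset_of_nonneg (Finset.range_subset_range.mpr hj)
    (fun i hi _ => (G.Rpos _ _ (hadj i (Finset.mem_range.mp hi))).le)

/-- Gluing countably many finite `W`-avoiding segments into one infinite chain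
converging to `x`. -/
lemma glue {W : Set (Sym2 V)} (x : Completion V) (a : ℕ → V) (n : ℕ → ℕ) (P : ℕ → ℕ → V)
    (hn : ∀ i, 1 ≤ n i)
    (h0 : ∀ i, P i 0 = a i) (h1 : ∀ i, P i (n i) = a (i + 1))
    (hstep : ∀ i, ∀ j < n i, WStep G W (P i j) (P i (j + 1)))
    (c : ℕ → ℝ) (hc : Tendsto c atTop (nhds 0))
    (hbound : ∀ i, 1 ≤ i → ∀ j ≤ n i, dist (↑(P i j) : Completion V) x ≤ c i) :
    ∃ q : ℕ → V, q 0 = a 0 ∧ (∀ m, WStep G W (q m) (q (m + 1))) ∧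
      Tendsto (fun m => (↑(q m) : Completion V)) atTop (nhds x) := by
  classical
  set N : ℕ → ℕ := fun i => ∑ k ∈ Finset.range i, n k with hN
  have hNsucc : ∀ i, N (i + 1) = N i + n i := fun i => Finset.sum_range_succ _ _
  have hNmono : StrictMono N := strictMono_nat_of_lt_succ fun i => by
    have := hn i; rw [hNsucc]; omega
  have hN0 : N 0 = 0 := rfl
  set idx : ℕ → ℕ := fun m => Nat.findGreatest (fun i => N i ≤ m) m with hidx
  have hNle : ∀ m, N (idx m) ≤ m := fun m =>
    Nat.findGreatest_spec (P := fun i => N i ≤ m) (Nat.zero_le m) (by omega)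
  have hNlt : ∀ m, m < N (idx m + 1) := by
    intro m
    by_contra hcon
    push_neg at hcon
    have hle : idx m + 1 ≤ m := le_trans (hNmono.le_apply) hcon
    exact absurd hcon
      (Nat.findGreatest_is_greatest (P := fun i => N i ≤ m) (Nat.lt_succ_self _) hle)
  have idx_eq : ∀ m i, N i ≤ m → m < N (i + 1) → idx m = i := by
    intro m i hi hi'
    rcases lt_trichotomy (idx m) i with h | h | h
    · exact absurd (le_trans (hNmono.monotone (by omega : idx m + 1 ≤ i)) hi)
        (by simpa using hNlt m)
    · exact h
    · exact absurd (le_trans (hNmono.monotone (by omega : i + 1 ≤ idx m)) (hNle m))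
        (by omega)
  refine ⟨fun m => P (idx m) (m - N (idx m)), ?_, ?_, ?_⟩
  · have h00 : idx 0 = 0 := idx_eq 0 0 (by omega) (by rw [hNsucc]; have := hn 0; omega)
    simp [h00, h0]
  · intro m
    have hjlt : m - N (idx m) < n (idx m) := by
      have := hNle m; have := hNlt m; have := hNsucc (idx m); omega
    rcases lt_or_ge (m + 1) (N (idx m + 1)) with hlt | hge
    · have he : idx (m + 1) = idx m := idx_eq (m + 1) (idx m) (by have := hNle m; omega) hlt
      have he2 : m + 1 - N (idx m) = (m - N (idx m)) + 1 := by have := hNle m; omega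
      dsimp only
      rw [he, he2]
      exact hstep (idx m) _ hjlt
    · have heq : m + 1 = N (idx m + 1) := by have := hNlt m; omega
      have he : idx (m + 1) = idx m + 1 := by
        refine idx_eq (m + 1) (idx m + 1) (by omega) ?_
        rw [hNsucc (idx m + 1)]; have := hn (idx m + 1); omega
      have he2 : m + 1 - N (idx m + 1) = 0 := by omega
      have he3 : m - N (idx m) = n (idx m) - 1 := by
        have := hNle m; have := hNsucc (idx m); omega
      dsimp only
      rw [he, he2, h0, ← h1, he3]
      have he4 : n (idx m) - 1 + 1 = n (idx m) := by have := hn (idx m); omega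
      rw [← he4]
      exact hstep (idx m) _ (by omega)
  · rw [Metric.tendsto_atTop]
    intro ε hε
    obtain ⟨I, hI⟩ := (hc.eventually (gt_mem_nhds hε)).exists_forall_of_atTop
    refine ⟨N (max I 1), fun m hm => ?_⟩
    have hidxge : max I 1 ≤ idx m := by
      by_contra hcon
      push_neg at hcon
      have : N (idx m + 1) ≤ N (max I 1) := hNmono.monotone (by omega)
      have := hNlt m
      omega
    have hb := hbound (idx m) (le_trans (le_max_right I 1) hidxge)
      (m - N (idx m)) (by have := hNle m; have := hNlt m; have := hNsucc (idx m); omega)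
    exact lt_of_le_of_lt hb (hI _ (le_trans (le_max_left I 1) hidxge))

/-- If every `CPath` from `x` to `y` must use an edge of `W`, then there is no pair of
`W`-avoiding chains from a common vertex converging to `x` and `y` respectively. -/
lemma no_wavoiding {W : Set (Sym2 V)} {x y : Completion V}
    (hW : ∀ γ : G.CPath x y, ∃ e ∈ W, γ.uses e)
    (qL qR : ℕ → V) (hq0 : qL 0 = qR 0)
    (hLs : ∀ m, WStep G W (qL m) (qL (m + 1)))
    (hRs : ∀ m, WStep G W (qR m) (qR (m + 1)))
    (hLt : Tendsto (fun m => (↑(qL m) : Completion V)) atTop (nhds x))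
    (hRt : Tendsto (fun m => (↑(qR m) : Completion V)) atTop (nhds y)) : False := by
  classical
  set p : ℤ → V := fun k => if 0 ≤ k then qR k.toNat else qL (-k).toNat with hp
  have hpneg : ∀ m : ℕ, p (-(m : ℤ)) = qL m := by
    intro m
    rcases Nat.eq_zero_or_pos m with rfl | hm
    · simp [hp, hq0]
    · simp only [hp]
      rw [if_neg (by omega)]
      congr 1
      omega
  have hppos : ∀ m : ℕ, p (m : ℤ) = qR m := by
    intro m
    simp only [hp]
    rw [if_pos (by omega)]
    congr 1
  have hstep : ∀ k : ℤ, WStep G W (p k) (p (k + 1)) := by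
    intro k
    rcases le_or_gt 0 k with hk | hk
    · obtain ⟨m, rfl⟩ := Int.eq_ofNat_of_zero_le hk
      have e1 : ((m : ℤ) + 1) = ((m + 1 : ℕ) : ℤ) := by omega
      rw [hppos m, e1, hppos (m + 1)]
      exact hRs m
    · obtain ⟨m, rfl⟩ : ∃ m : ℕ, k = -((m + 1 : ℕ) : ℤ) :=
        ⟨(-k).toNat - 1, by omega⟩
      have e1 : (-((m + 1 : ℕ) : ℤ) + 1) = -((m : ℕ) : ℤ) := by omega
      rw [hpneg (m + 1), e1, hpneg m]
      exact (hLs m).symm'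
  set γ : G.CPath x y :=
    { p := p
      step := fun k => (hstep k).imp id And.left
      tendsto_left := by simpa only [hpneg] using hLt
      tendsto_right := by simpa only [hppos] using hRt }
  obtain ⟨e, heW, k, hne, hes⟩ := hW γ
  rcases hstep k with heq | ⟨-, hnot⟩
  · exact hne heq
  · exact hnot (hes ▸ heW)

/-- Core separation lemma: two distinct points of the completion can be separated by an
eventually flat `{0,1}`-valued function, with the values attained on neighborhoods. -/
lemma core (hmet : G.IsPathMetric) (hconn : G.Connected) (hw : G.WeaklyConnected)
    {x y : Completion V} (hxy : x ≠ y) :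
    ∃ (f : V → ℝ) (F : Completion V → ℝ),
      G.EventuallyFlat f ∧ Continuous F ∧ (∀ v : V, F ↑v = f v) ∧
      (∀ z, F z ∈ Set.Icc (0 : ℝ) 1) ∧
      (∀ᶠ z in nhds x, F z = 1) ∧ (∀ᶠ z in nhds y, F z = 0) := by
  classical
  obtain ⟨W, hWfin, hWsub, hWsep⟩ := hw x y hxy
  have hrpos : 0 < rmin G W hWfin := rmin_pos hWfin hWsub
  set r := rmin G W hWfin with hrdef
  have hdense : ∀ (z : Completion V) (ε : ℝ), 0 < ε →
      ∃ v : V, dist (↑v : Completion V) z < ε := by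
    intro z ε hε
    obtain ⟨v, hv⟩ := Metric.denseRange_iff.mp Completion.denseRange_coe z ε hε
    exact ⟨v, by rwa [dist_comm]⟩
  set δ : ℕ → ℝ := fun i => min r ((1 / 2) ^ i) / 4 with hδ
  have hδpos : ∀ i, 0 < δ i := fun i =>
    div_pos (lt_min hrpos (by positivity)) (by norm_num)
  have hδanti : ∀ i, δ (i + 1) ≤ δ i := by
    intro i
    have h2 : ((1 : ℝ) / 2) ^ (i + 1) ≤ (1 / 2) ^ i :=
      pow_le_pow_of_le_one (by norm_num) (by norm_num) (by omega)
    simp only [hδ]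
    gcongr
  have hδle2 : ∀ i, δ i ≤ (1 / 2) ^ i / 4 := by
    intro i
    simp only [hδ]
    gcongr
    exact min_le_right _ _
  have hδ0 : Tendsto δ atTop (nhds 0) := by
    refine squeeze_zero (fun i => (hδpos i).le) hδle2 ?_
    simpa using
      ((tendsto_pow_atTop_nhds_zero_of_lt_one (r := (1:ℝ)/2) (by norm_num)
        (by norm_num)).div_const 4)
  choose xs hxs using fun i => hdense x (δ i) (hδpos i)
  choose ys hys using fun i => hdense y (δ i) (hδpos i)
  have hcons : ∀ (z : Completion V) (zs : ℕ → V), (∀ i, dist (↑(zs i) : Completion V) z < δ i) →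
      ∀ i, dist (zs i) (zs (i + 1)) < min r ((1 / 2) ^ i) / 2 := by
    intro z zs hzs i
    rw [← Completion.dist_eq]
    calc dist (↑(zs i) : Completion V) ↑(zs (i + 1))
        ≤ dist (↑(zs i) : Completion V) z + dist (↑(zs (i + 1)) : Completion V) z :=
          dist_triangle_right _ _ _
      _ < δ i + δ i := by
          have h1 := hzs i; have h2 := hzs (i + 1); have h3 := hδanti i; linarith
      _ = min r ((1 / 2) ^ i) / 2 := by rw [hδ]; ring
  have hxx := hcons x xs hxs
  have hyy := hcons y ys hys
  have hxt : ∀ (z : Completion V) (zs : ℕ → V),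
      (∀ i, dist (↑(zs i) : Completion V) z < δ i) →
      Tendsto (fun i => (↑(zs i) : Completion V)) atTop (nhds z) := by
    intro z zs hzs
    rw [tendsto_iff_dist_tendsto_zero]
    exact squeeze_zero (fun i => dist_nonneg) (fun i => (hzs i).le) hδ0
  have hminr : ∀ b : ℝ, min r b / 2 ≤ r := fun b => by
    have := min_le_left r b; linarith
  -- short paths give `W`-avoiding paths
  have hWd : ∀ u v : V, dist u v < r → WPath G W u v := by
    intro u v huv
    obtain ⟨n, p, h0, h1, hadj, hlen⟩ := exists_short hmet hconn huv
    exact ⟨n, p, h0, h1, steps_avoid hWfin hadj hlen⟩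
  -- segments for gluing
  have hseg : ∀ (u w : V) (b : ℝ), dist u w < min r b / 2 →
      ∃ (m : ℕ) (q : ℕ → V), 1 ≤ m ∧ q 0 = u ∧ q m = w ∧
        (∀ k < m, WStep G W (q k) (q (k + 1))) ∧ ∀ j ≤ m, dist u (q j) ≤ b / 2 := by
    intro u w b hd
    obtain ⟨n, p, h0, h1, hadj, hlen⟩ := exists_short hmet hconn hd
    have hlenr : ∑ k ∈ Finset.range n, G.R (p k) (p (k + 1)) < r :=
      lt_of_lt_of_le hlen (hminr b)
    have hsteps := steps_avoid hWfin hadj hlenr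
    have hmem : ∀ j ≤ n, p j ∈ {w' : V | dist u w' ≤ b / 2} := by
      intro j hj
      refine le_trans (vertex_dist_le hmet h0 hadj hj) (le_trans hlen.le ?_)
      have := min_le_right r b
      linarith
    exact pad_seg _ h0 h1 hsteps hmem
  set A : Set V := {v | WPath G W (xs 0) v} with hA
  set f : V → ℝ := fun v => if v ∈ A then 1 else 0 with hf
  have hfw : ∀ u v : V, WPath G W u v → f u = f v := by
    intro u v hp
    simp only [hf]
    by_cases hu : u ∈ A
    · rw [if_pos hu, if_pos (show v ∈ A from WPath.trans hu hp)]
    · rw [if_neg hu, if_neg (show v ∉ A from fun hv => hu (WPath.trans hv hp.symm))]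
  have hff : ∀ u v : V, dist u v < r → f u = f v := fun u v huv => hfw u v (hWd u v huv)
  have huc : UniformContinuous f := by
    rw [Metric.uniformContinuous_iff]
    intro ε hε
    exact ⟨r, hrpos, fun {a b} hab => by rw [hff a b hab]; simpa using hε⟩
  set F : Completion V → ℝ := Completion.extension f with hF
  have hFc : Continuous F := Completion.continuous_extension
  have hFcoe : ∀ v : V, F ↑v = f v := fun v => Completion.extension_coe huc v
  have hbool : ∀ z, F z = 0 ∨ F z = 1 := by
    intro z
    have hclosed : IsClosed {z : Completion V | F z ∈ ({0, 1} : Set ℝ)} :=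
      IsClosed.preimage hFc (((Set.finite_singleton (1:ℝ)).insert 0).isClosed)
    have hsub : Set.range ((↑) : V → Completion V) ⊆ {z | F z ∈ ({0, 1} : Set ℝ)} := by
      rintro _ ⟨v, rfl⟩
      rw [Set.mem_setOf_eq, hFcoe]
      simp only [hf]
      split_ifs <;> simp
    have hz : F z ∈ ({0, 1} : Set ℝ) :=
      hclosed.closure_subset_iff.mpr hsub (Completion.denseRange_coe z)
    simpa using hz
  have hIcc : ∀ z, F z ∈ Set.Icc (0 : ℝ) 1 := by
    intro z
    rcases hbool z with h | h <;> simp [h]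
  -- x-side values
  have hxA : ∀ i, xs i ∈ A := by
    intro i
    induction i with
    | zero => exact WPath.refl W (xs 0)
    | succ i ih =>
      exact WPath.trans ih (hWd (xs i) (xs (i + 1))
        (lt_of_lt_of_le (hxx i) (hminr _)))
  have hFx : F x = 1 := by
    have h1 : Tendsto (fun i => F (↑(xs i) : Completion V)) atTop (nhds (F x)) :=
      (hFc.continuousAt.tendsto).comp (hxt x xs hxs)
    have h2 : (fun i => F (↑(xs i) : Completion V)) = fun _ => (1 : ℝ) := by
      funext i
      rw [hFcoe]
      simp only [hf]
      rw [if_pos (hxA i)]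
    rw [h2] at h1
    exact tendsto_nhds_unique h1 tendsto_const_nhds
  -- y-side: `ys 0 ∉ A`, otherwise we could build a `W`-avoiding `CPath` from `x` to `y`.
  have hy0 : ys 0 ∉ A := by
    intro hcross
    -- left chain toward x
    have hxsegs : ∀ i, ∃ (m : ℕ) (q : ℕ → V), 1 ≤ m ∧ q 0 = xs i ∧ q m = xs (i + 1) ∧
        (∀ k < m, WStep G W (q k) (q (k + 1))) ∧
        ∀ j ≤ m, dist (xs i) (q j) ≤ (1 / 2) ^ i / 2 :=
      fun i => hseg (xs i) (xs (i + 1)) ((1 / 2) ^ i) (hxx i)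
    choose nL PL hL1 hL0 hLe hLs hLm using hxsegs
    have hLbound : ∀ i, 1 ≤ i → ∀ j ≤ nL i,
        dist (↑(PL i j) : Completion V) x ≤ (1 / 2) ^ i / 2 + δ i := by
      intro i _ j hj
      calc dist (↑(PL i j) : Completion V) x
          ≤ dist (↑(PL i j) : Completion V) ↑(xs i) + dist (↑(xs i) : Completion V) x :=
            dist_triangle _ _ _
        _ ≤ (1 / 2) ^ i / 2 + δ i := by
            have h1 := hLm i j hj
            rw [Completion.dist_eq, dist_comm] at *
            exact add_le_add (by rwa [dist_comm] at h1) (hxs i).le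
    obtain ⟨qL, hqL0, hqLs, hqLt⟩ := glue x xs nL PL hL1 hL0 hLe hLs
      (fun i => (1 / 2) ^ i / 2 + δ i)
      (by
        have : Tendsto (fun i : ℕ => ((1 : ℝ) / 2) ^ i / 2) atTop (nhds 0) := by
          simpa using ((tendsto_pow_atTop_nhds_zero_of_lt_one (r := (1:ℝ)/2) (by norm_num)
            (by norm_num)).div_const 2)
        simpa using this.add hδ0)
      hLbound
    -- right chain toward y
    set aR : ℕ → V := fun i => Nat.rec (xs 0) (fun j _ => ys j) i with haR
    set cR : ℕ → ℝ := fun i => (1 / 2) ^ (i - 1) / 2 + δ (i - 1) with hcR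
    have hysegs : ∀ i, ∃ (m : ℕ) (q : ℕ → V), 1 ≤ m ∧ q 0 = aR i ∧ q m = aR (i + 1) ∧
        (∀ k < m, WStep G W (q k) (q (k + 1))) ∧
        (1 ≤ i → ∀ j ≤ m, dist (↑(q j) : Completion V) y ≤ cR i) := by
      intro i
      match i with
      | 0 =>
        obtain ⟨n, p, h0, h1, hs⟩ := hcross
        obtain ⟨m, q, hm1, hq0, hqm, hqs, -⟩ :=
          pad_seg (Set.univ : Set V) h0 h1 hs (fun j _ => Set.mem_univ _)
        exact ⟨m, q, hm1, hq0, hqm, hqs, fun h => absurd h (by omega)⟩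
      | (j + 1) =>
        obtain ⟨m, q, hm1, hq0, hqm, hqs, hqb⟩ :=
          hseg (ys j) (ys (j + 1)) ((1 / 2) ^ j) (hyy j)
        refine ⟨m, q, hm1, hq0, hqm, hqs, fun _ j' hj' => ?_⟩
        calc dist (↑(q j') : Completion V) y
            ≤ dist (↑(q j') : Completion V) ↑(ys j) + dist (↑(ys j) : Completion V) y :=
              dist_triangle _ _ _
          _ ≤ (1 / 2) ^ j / 2 + δ j := by
              have h1 := hqb j' hj'
              rw [Completion.dist_eq]
              exact add_le_add (by rwa [dist_comm]) (hys j).le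
          _ = cR (j + 1) := by simp [hcR]
    choose nR PR hR1 hR0 hRe hRs hRm using hysegs
    obtain ⟨qR, hqR0, hqRs, hqRt⟩ := glue y aR nR PR hR1 hR0 hRe hRs cR
      (by
        have hg : Tendsto (fun j : ℕ => ((1 : ℝ) / 2) ^ j / 2 + δ j) atTop (nhds 0) := by
          have : Tendsto (fun j : ℕ => ((1 : ℝ) / 2) ^ j / 2) atTop (nhds 0) := by
            simpa using ((tendsto_pow_atTop_nhds_zero_of_lt_one (r := (1:ℝ)/2) (by norm_num)
              (by norm_num)).div_const 2)
          simpa using this.add hδ0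
        exact hg.comp (tendsto_sub_atTop_nat 1))
      hRm
    exact no_wavoiding hWsep qL qR (by rw [hqL0, hqR0]; rfl) hqLs hqRs hqLt hqRt
  have hyc : ∀ i, WPath G W (ys 0) (ys i) := by
    intro i
    induction i with
    | zero => exact WPath.refl W (ys 0)
    | succ i ih =>
      exact WPath.trans ih (hWd (ys i) (ys (i + 1)) (lt_of_lt_of_le (hyy i) (hminr _)))
  have hyA : ∀ i, ys i ∉ A := fun i hi => hy0 (WPath.trans hi (hyc i).symm)
  have hFy : F y = 0 := by
    have h1 : Tendsto (fun i => F (↑(ys i) : Completion V)) atTop (nhds (F y)) :=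
      (hFc.continuousAt.tendsto).comp (hxt y ys hys)
    have h2 : (fun i => F (↑(ys i) : Completion V)) = fun _ => (0 : ℝ) := by
      funext i
      rw [hFcoe]
      simp only [hf]
      rw [if_neg (hyA i)]
    rw [h2] at h1
    exact tendsto_nhds_unique h1 tendsto_const_nhds
  -- eventual equalities
  have hev1 : ∀ᶠ z in nhds x, F z = 1 := by
    have hhalf : ∀ᶠ z in nhds x, (1 / 2 : ℝ) < F z := by
      have h1 : Tendsto F (nhds x) (nhds (1 : ℝ)) := hFx ▸ hFc.continuousAt.tendsto
      exact h1.eventually (eventually_gt_nhds (by norm_num))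
    filter_upwards [hhalf] with z hz
    rcases hbool z with h | h
    · rw [h] at hz; norm_num at hz
    · exact h
  have hev0 : ∀ᶠ z in nhds y, F z = 0 := by
    have hhalf : ∀ᶠ z in nhds y, F z < (1 / 2 : ℝ) := by
      have h1 : Tendsto F (nhds y) (nhds (0 : ℝ)) := hFy ▸ hFc.continuousAt.tendsto
      exact h1.eventually (eventually_lt_nhds (by norm_num))
    filter_upwards [hhalf] with z hz
    rcases hbool z with h | h
    · exact h
    · rw [h] at hz; norm_num at hz
  -- eventual flatness
  have hflat : G.EventuallyFlat f := by
    apply Set.Finite.subset (hWfin.biUnion (fun e (_ : e ∈ W) => fiber_finite e))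
    rintro ⟨u, v⟩ ⟨hadj, hne'⟩
    have hmem : s(u, v) ∈ W := by
      by_contra hnot
      exact hne' (hfw u v (WPath.single hadj hnot))
    simp only [Set.mem_iUnion]
    exact ⟨s(u, v), hmem, rfl⟩
  exact ⟨f, F, hflat, hFc, hFcoe, hIcc, hev1, hev0⟩

/-- Separation of a point from a nonempty compact set not containing it. -/
lemma middle (hmet : G.IsPathMetric) (hconn : G.Connected) (hw : G.WeaklyConnected)
    {x : Completion V} {K : Set (Completion V)} (hK : IsCompact K) (hKne : K.Nonempty)
    (hxK : x ∉ K) :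
    ∃ (f : V → ℝ) (F : Completion V → ℝ),
      G.EventuallyFlat f ∧ Continuous F ∧ (∀ v : V, F ↑v = f v) ∧
      (∀ z, F z ∈ Set.Icc (0 : ℝ) 1) ∧ (∀ᶠ z in nhds x, F z = 1) ∧
      (∀ z ∈ K, F z = 0) := by
  classical
  have hxy : ∀ y : K, x ≠ (y : Completion V) := fun y h => hxK (h ▸ y.2)
  choose f F hflat hcont hagree hicc h1 h0 using fun y : K => core hmet hconn hw (hxy y)
  obtain ⟨t, ht⟩ := hK.elim_nhds_subcover' (fun y hy => {z | F ⟨y, hy⟩ z = 0})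
    (fun y hy => h0 ⟨y, hy⟩)
  have htne : t.Nonempty := by
    obtain ⟨z, hz⟩ := hKne
    obtain ⟨y, hy, -⟩ := Set.mem_iUnion₂.mp (ht hz)
    exact ⟨y, hy⟩
  refine ⟨fun v => t.inf' htne (fun y => f y v), fun z => t.inf' htne (fun y => F y z),
    ?_, ?_, ?_, ?_, ?_, ?_⟩
  · refine Set.Finite.subset (Set.Finite.biUnion t.finite_toSet (fun y _ => hflat y)) ?_
    rintro ⟨u, v⟩ ⟨hadj, hne'⟩
    simp only [Set.mem_iUnion]
    by_contra hcon
    push_neg at hcon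
    refine hne' (Finset.inf'_congr htne rfl fun y hy => ?_)
    by_contra hfy
    exact hcon y (Finset.mem_coe.mpr hy) ⟨hadj, hfy⟩
  · exact Continuous.finset_inf'_apply htne fun y _ => hcont y
  · exact fun v => Finset.inf'_congr htne rfl fun y _ => hagree y v
  · intro z
    obtain ⟨y0, hy0⟩ := id htne
    exact Set.mem_Icc.mpr ⟨Finset.le_inf' htne _ fun y _ => (hicc y z).1,
      le_trans (Finset.inf'_le _ hy0) (hicc y0 z).2⟩
  · have hall : ∀ᶠ z in nhds x, ∀ y ∈ t, F y z = 1 :=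
      (Filter.eventually_all_finset t).mpr fun y _ => h1 y
    filter_upwards [hall] with z hz
    rw [Finset.inf'_congr htne rfl fun y hy => hz y hy]
    exact Finset.inf'_const _ _
  · intro z hz
    obtain ⟨y, hy, hzy⟩ := Set.mem_iUnion₂.mp (ht hz)
    exact le_antisymm (le_trans (Finset.inf'_le _ hy) (le_of_eq hzy))
      (Finset.le_inf' htne _ fun y' _ => (hicc y' z).1)

end Metric

end EFU

end Aux

/-- Urysohn-type separation of disjoint nonempty compact sets by
an eventually flat function with values in `[0,1]`. -/
theorem eventuallyFlat_urysohn {V : Type*} [MetricSpace V] [Countable V]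
    (G : WGraph V) (hmet : G.IsPathMetric) (hconn : G.Connected)
    (hw : G.WeaklyConnected)
    (Ω Ω1 : Set (UniformSpace.Completion V))
    (hΩ : IsCompact Ω) (hΩ1 : IsCompact Ω1)
    (hne : Ω.Nonempty) (hne1 : Ω1.Nonempty) (hdisj : Disjoint Ω Ω1) :
    ∃ (f : V → ℝ) (F : UniformSpace.Completion V → ℝ),
      G.EventuallyFlat f ∧ Continuous F ∧ (∀ v : V, F ↑v = f v) ∧
      (∀ x, F x ∈ Set.Icc (0 : ℝ) 1) ∧
      (∀ x ∈ Ω, F x = 1) ∧ (∀ x ∈ Ω1, F x = 0) := by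
  classical
  have hx1 : ∀ x : Ω, (x : UniformSpace.Completion V) ∉ Ω1 :=
    fun x => Set.disjoint_left.mp hdisj x.2
  choose f F hflat hcont hagree hicc h1 h0 using fun x : Ω =>
    EFU.middle (G := G) hmet hconn hw hΩ1 hne1 (hx1 x)
  obtain ⟨t, ht⟩ := hΩ.elim_nhds_subcover' (fun x hx => {z | F ⟨x, hx⟩ z = 1})
    (fun x hx => h1 ⟨x, hx⟩)
  have htne : t.Nonempty := by
    obtain ⟨z, hz⟩ := hne
    obtain ⟨y, hy, -⟩ := Set.mem_iUnion₂.mp (ht hz)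
    exact ⟨y, hy⟩
  refine ⟨fun v => t.sup' htne (fun x => f x v), fun z => t.sup' htne (fun x => F x z),
    ?_, ?_, ?_, ?_, ?_, ?_⟩
  · refine Set.Finite.subset (Set.Finite.biUnion t.finite_toSet (fun x _ => hflat x)) ?_
    rintro ⟨u, v⟩ ⟨hadj, hne'⟩
    simp only [Set.mem_iUnion]
    by_contra hcon
    push_neg at hcon
    refine hne' (Finset.sup'_congr htne rfl fun y hy => ?_)
    by_contra hfy
    exact hcon y (Finset.mem_coe.mpr hy) ⟨hadj, hfy⟩
  · exact Continuous.finset_sup'_apply htne fun x _ => hcont x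
  · exact fun v => Finset.sup'_congr htne rfl fun x _ => hagree x v
  · intro z
    obtain ⟨x0, hx0⟩ := id htne
    dsimp only
    exact Set.mem_Icc.mpr ⟨le_trans (hicc x0 z).1 (Finset.le_sup' (fun x => F x z) hx0),
      Finset.sup'_le htne _ fun x _ => (hicc x z).2⟩
  · intro z hz
    obtain ⟨x, hx, hzx⟩ := Set.mem_iUnion₂.mp (ht hz)
    dsimp only
    exact le_antisymm (Finset.sup'_le htne _ fun x' _ => (hicc x' z).2)
      (le_trans (le_of_eq hzx.symm) (Finset.le_sup' (fun x' => F x' z) hx))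
  · intro z hz
    dsimp only
    rw [Finset.sup'_congr htne rfl fun x _ => h0 x z hz]
    exact Finset.sup'_const _ _
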